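/- Let (γ_k) be defined by γ_{k+1} = γ_k/√(1 + 2γ_k(μ_B − γ_k L²/2)) with γ₀ ∈ (0, 2μ_B/L²), μ_B > 0, L ≥ 0. Then (γ_k) is positive, decreasing, γ_k → 0, and (k+1)γ_k → 1/μ_B as k → ∞; consequently γ_k = Θ(1/(k+1)). -/

import Mathlib

open Filter

/-- Behavior of the accelerated stepsize sequence
`γ_{k+1} = γ_k / √(1 + 2γ_k(μ_B - γ_k L²/2))` with `γ₀ ∈ (0, 2μ_B/L²)`:
positivity, strict decrease, `γ_k → 0`, `(k+1)γ_k → 1/μ_B`, and `γ_k = Θ(1/(k+1))`. -/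
theorem accelerated_stepsize_asymptotics
    (γ : ℕ → ℝ) (μB L : ℝ) (hμB : 0 < μB) (hL : 0 ≤ L)
    (h0 : 0 < γ 0) (h0' : γ 0 * L ^ 2 < 2 * μB)
    (hrec : ∀ k, γ (k + 1) = γ k / Real.sqrt (1 + 2 * γ k * (μB - γ k * L ^ 2 / 2))) :
    (∀ k, 0 < γ k) ∧ StrictAnti γ ∧
    Tendsto γ atTop (nhds 0) ∧
    Tendsto (fun k : ℕ => ((k : ℝ) + 1) * γ k) atTop (nhds (1 / μB)) ∧
    ∃ c₁ c₂ : ℝ, 0 < c₁ ∧ ∀ k : ℕ, c₁ / ((k : ℝ) + 1) ≤ γ k ∧ γ k ≤ c₂ / ((k : ℝ) + 1) := by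
  set q : ℕ → ℝ := fun k => 1 + 2 * γ k * (μB - γ k * L ^ 2 / 2) with hq
  -- invariant: positivity, bound, decrease
  have key : ∀ k, 0 < γ k ∧ γ k * L ^ 2 < 2 * μB ∧ γ (k + 1) < γ k := by
    intro k
    induction k with
    | zero =>
      refine ⟨h0, h0', ?_⟩
      have hq1 : 1 < q 0 := by simp only [hq]; nlinarith
      have hs : 1 < Real.sqrt (q 0) := by
        rw [show (1:ℝ) = Real.sqrt 1 from Real.sqrt_one.symm]
        exact Real.sqrt_lt_sqrt zero_le_one hq1
      rw [hrec 0]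
      exact div_lt_self h0 hs
    | succ k ih =>
      obtain ⟨hpos, hlt, hdec⟩ := ih
      have hpos' : 0 < γ (k + 1) := by
        rw [hrec k]
        have hq1 : 1 < q k := by simp only [hq]; nlinarith
        exact div_pos hpos (by positivity)
      have hlt' : γ (k + 1) * L ^ 2 < 2 * μB := by nlinarith
      refine ⟨hpos', hlt', ?_⟩
      have hq1 : 1 < q (k + 1) := by simp only [hq]; nlinarith
      have hs : 1 < Real.sqrt (q (k + 1)) := by
        rw [show (1:ℝ) = Real.sqrt 1 from Real.sqrt_one.symm]
        exact Real.sqrt_lt_sqrt zero_le_one hq1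
      rw [hrec (k + 1)]
      exact div_lt_self hpos' hs
  have hpos : ∀ k, 0 < γ k := fun k => (key k).1
  have hbd : ∀ k, γ k * L ^ 2 < 2 * μB := fun k => (key k).2.1
  have hanti : StrictAnti γ := strictAnti_nat_of_succ_lt fun k => (key k).2.2
  have hmono : ∀ k, γ k ≤ γ 0 := fun k => hanti.antitone (Nat.zero_le k)
  -- basic facts about q
  have hq1 : ∀ k, 1 < q k := by intro k; have := hpos k; have := hbd k; simp only [hq]; nlinarith
  have hq0 : ∀ k, 0 < q k := fun k => lt_trans one_pos (hq1 k)
  have hs1 : ∀ k, 1 < Real.sqrt (q k) := by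
    intro k
    rw [show (1:ℝ) = Real.sqrt 1 from Real.sqrt_one.symm]
    exact Real.sqrt_lt_sqrt zero_le_one (hq1 k)
  have hs0 : ∀ k, 0 < Real.sqrt (q k) := fun k => lt_trans one_pos (hs1 k)
  -- b k = 1/γ k
  set b : ℕ → ℝ := fun k => (γ k)⁻¹ with hb
  have hbpos : ∀ k, 0 < b k := fun k => inv_pos.mpr (hpos k)
  have hγb : ∀ k, γ k * b k = 1 := fun k => mul_inv_cancel₀ (hpos k).ne'
  have hbrec : ∀ k, b (k + 1) = Real.sqrt (q k) * b k := by
    intro k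
    simp only [hb, hrec k]
    rw [div_eq_mul_inv, mul_inv, inv_inv, mul_comm]
  -- square identity
  have hsq : ∀ k, b (k + 1) ^ 2 = b k ^ 2 + 2 * μB * b k - L ^ 2 := by
    intro k
    rw [hbrec k, mul_pow, Real.sq_sqrt (hq0 k).le]
    have hgne := (hpos k).ne'
    simp only [hq, hb]
    field_simp
    ring
  -- difference identity
  have hdiff : ∀ k, b (k + 1) - b k = (2 * μB - γ k * L ^ 2) / (Real.sqrt (q k) + 1) := by
    intro k
    have hgne := (hpos k).ne'
    have hsne : Real.sqrt (q k) + 1 ≠ 0 := by have := hs0 k; linarith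
    have hsqk : Real.sqrt (q k) * Real.sqrt (q k) = q k := Real.mul_self_sqrt (hq0 k).le
    have h1 : Real.sqrt (q k) - 1 = (q k - 1) / (Real.sqrt (q k) + 1) := by
      rw [eq_div_iff hsne]
      linear_combination hsqk
    rw [hbrec k]
    have h2 : Real.sqrt (q k) * b k - b k = (Real.sqrt (q k) - 1) * b k := by ring
    rw [h2, h1, div_mul_eq_mul_div]
    congr 1
    simp only [hq, hb]
    field_simp
    ring
  -- upper bound on b : b (k+1) ≤ b k + μB
  have hbub : ∀ k, b (k + 1) ≤ b k + μB := by
    intro k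
    have h1 : b (k + 1) ^ 2 ≤ (b k + μB) ^ 2 := by rw [hsq k]; nlinarith
    nlinarith [hbpos (k + 1), hbpos k, hμB]
  have hbub' : ∀ k, b k ≤ b 0 + k * μB := by
    intro k
    induction k with
    | zero => simp
    | succ k ih =>
      have := hbub k
      push_cast
      push_cast at ih
      linarith
  -- lower bound on difference
  set ε : ℝ := 2 * μB - γ 0 * L ^ 2 with hε
  have hεpos : 0 < ε := by simp only [hε]; linarith
  set C : ℝ := Real.sqrt (1 + 2 * γ 0 * μB) + 1 with hC
  have hCpos : 0 < C := by positivity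
  have hqub : ∀ k, q k ≤ 1 + 2 * γ 0 * μB := by
    intro k
    have h1 := hpos k
    have h2 := hmono k
    simp only [hq]
    nlinarith [sq_nonneg (γ k * L)]
  have hdlb : ∀ k, ε / C ≤ b (k + 1) - b k := by
    intro k
    rw [hdiff k]
    have hnum : ε ≤ 2 * μB - γ k * L ^ 2 := by
      simp only [hε]
      nlinarith [hmono k, sq_nonneg L]
    have hden : Real.sqrt (q k) + 1 ≤ C := by
      simp only [hC]
      have := Real.sqrt_le_sqrt (hqub k)
      linarith
    exact div_le_div₀ (by linarith) hnum (by have := hs0 k; linarith) hden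
  have hblb : ∀ k : ℕ, b 0 + k * (ε / C) ≤ b k := by
    intro k
    induction k with
    | zero => simp
    | succ k ih =>
      have := hdlb k
      push_cast
      push_cast at ih
      linarith
  -- Θ bounds
  set M : ℝ := max (b 0) μB with hM
  set m : ℝ := min (b 0) (ε / C) with hm
  have hMpos : 0 < M := lt_of_lt_of_le (hbpos 0) (le_max_left _ _)
  have hmpos : 0 < m := lt_min (hbpos 0) (div_pos hεpos hCpos)
  have hbub2 : ∀ k : ℕ, b k ≤ ((k : ℝ) + 1) * M := by
    intro k
    have h1 := hbub' k
    have h2 : b 0 + (k : ℝ) * μB ≤ ((k : ℝ) + 1) * M := by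
      have hk : (0:ℝ) ≤ k := Nat.cast_nonneg k
      have := le_max_left (b 0) μB
      have := le_max_right (b 0) μB
      nlinarith
    linarith
  have hblb2 : ∀ k : ℕ, ((k : ℝ) + 1) * m ≤ b k := by
    intro k
    have h1 := hblb k
    have h2 : ((k : ℝ) + 1) * m ≤ b 0 + (k : ℝ) * (ε / C) := by
      have hk : (0:ℝ) ≤ k := Nat.cast_nonneg k
      have := min_le_left (b 0) (ε / C)
      have := min_le_right (b 0) (ε / C)
      nlinarith
    linarith
  have hγub : ∀ k : ℕ, γ k ≤ m⁻¹ / ((k : ℝ) + 1) := by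
    intro k
    have hk1 : (0:ℝ) < (k : ℝ) + 1 := by positivity
    have h : (b k)⁻¹ ≤ (((k : ℝ) + 1) * m)⁻¹ :=
      inv_anti₀ (mul_pos hk1 hmpos) (hblb2 k)
    have heq : (b k)⁻¹ = γ k := by simp [hb]
    rw [heq] at h
    calc γ k ≤ (((k : ℝ) + 1) * m)⁻¹ := h
      _ = m⁻¹ / ((k : ℝ) + 1) := by rw [mul_inv]; ring
  have hγlb : ∀ k : ℕ, M⁻¹ / ((k : ℝ) + 1) ≤ γ k := by
    intro k
    have hk1 : (0:ℝ) < (k : ℝ) + 1 := by positivity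
    have h : (((k : ℝ) + 1) * M)⁻¹ ≤ (b k)⁻¹ :=
      inv_anti₀ (hbpos k) (hbub2 k)
    have heq : (b k)⁻¹ = γ k := by simp [hb]
    rw [heq] at h
    calc M⁻¹ / ((k : ℝ) + 1) = (((k : ℝ) + 1) * M)⁻¹ := by rw [mul_inv]; ring
      _ ≤ γ k := h
  -- γ → 0
  have hγ0 : Tendsto γ atTop (nhds 0) := by
    apply squeeze_zero (fun k => (hpos k).le) hγub
    have h1 : Tendsto (fun k : ℕ => 1 / ((k : ℝ) + 1)) atTop (nhds 0) :=
      tendsto_one_div_add_atTop_nhds_zero_nat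
    have := h1.const_mul m⁻¹
    simp only [mul_zero] at this
    apply this.congr
    intro k
    ring
  -- limits of q and sqrt q
  have hqlim : Tendsto q atTop (nhds 1) := by
    have hc : Continuous fun x : ℝ => 1 + 2 * x * (μB - x * L ^ 2 / 2) := by fun_prop
    have h := (hc.tendsto 0).comp hγ0
    simp only [Function.comp_def] at h
    simpa using h
  have hslim : Tendsto (fun k => Real.sqrt (q k)) atTop (nhds 1) := by
    have h := (Real.continuous_sqrt.tendsto 1).comp hqlim
    simp only [Function.comp_def] at h
    simpa using h
  -- limit of differences
  have hdlim : Tendsto (fun k => b (k + 1) - b k) atTop (nhds μB) := by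
    have hnum : Tendsto (fun k => 2 * μB - γ k * L ^ 2) atTop (nhds (2 * μB)) := by
      have := (hγ0.mul_const (L ^ 2))
      simpa using tendsto_const_nhds.sub this
    have hden : Tendsto (fun k => Real.sqrt (q k) + 1) atTop (nhds 2) := by
      have := hslim.add (tendsto_const_nhds (x := (1:ℝ)))
      norm_num at this
      exact this
    have h := hnum.div hden (by norm_num)
    have h2 : 2 * μB / 2 = μB := by ring
    rw [h2] at h
    exact h.congr fun k => (hdiff k).symm
  -- Cesàro
  have hces := hdlim.cesaro
  have hsum : ∀ n, ∑ i ∈ Finset.range n, (b (i + 1) - b i) = b n - b 0 :=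
    fun n => Finset.sum_range_sub b n
  have h1 : Tendsto (fun n : ℕ => ((n : ℝ))⁻¹ * (b n - b 0)) atTop (nhds μB) := by
    apply hces.congr
    intro n
    rw [hsum n]
  have hninv : Tendsto (fun n : ℕ => ((n : ℝ))⁻¹) atTop (nhds 0) :=
    tendsto_inv_atTop_zero.comp tendsto_natCast_atTop_atTop
  have h2 : Tendsto (fun n : ℕ => ((n : ℝ))⁻¹ * b n) atTop (nhds μB) := by
    have := h1.add (hninv.mul_const (b 0))
    simp only [zero_mul, add_zero] at this
    apply this.congr
    intro n
    ring
  have hn1 : Tendsto (fun n : ℕ => (n : ℝ) / ((n : ℝ) + 1)) atTop (nhds 1) := by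
    have h := (tendsto_const_nhds (x := (1:ℝ))).sub tendsto_one_div_add_atTop_nhds_zero_nat
    rw [sub_zero] at h
    apply h.congr
    intro n
    have hne : ((n : ℝ) + 1) ≠ 0 := by positivity
    rw [eq_div_iff hne]
    field_simp
    ring
  have h3 : Tendsto (fun n : ℕ => (((n : ℝ) + 1))⁻¹ * b n) atTop (nhds μB) := by
    have h := h2.mul hn1
    rw [mul_one] at h
    apply h.congr' ?_
    filter_upwards [eventually_ge_atTop 1] with n hn
    have hn0 : ((n : ℝ)) ≠ 0 := by
      simp only [ne_eq, Nat.cast_eq_zero]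
      omega
    have hn1' : ((n : ℝ) + 1) ≠ 0 := by positivity
    field_simp
  have h4 : Tendsto (fun k : ℕ => ((k : ℝ) + 1) * γ k) atTop (nhds (1 / μB)) := by
    have h := h3.inv₀ hμB.ne'
    rw [← one_div] at h
    apply h.congr
    intro k
    rw [mul_inv, inv_inv]
    simp [hb]
  refine ⟨hpos, hanti, hγ0, h4, M⁻¹, m⁻¹, inv_pos.mpr hMpos, fun k => ⟨hγlb k, hγub k⟩⟩
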